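/- Let k be a field of characteristic ≠ 2 and let W ⊂ ℙ² × ℙ² be a hypersurface of bidegree (2,2) given by A y₀² + B y₀y₁ + C y₀y₂ + D y₁² + E y₁y₂ + F y₂² = 0 with A,...,F quadratic forms in x₀,x₁,x₂. If w ∈ W is a singular point, then its image under the first projection is a singular point of the discriminant sextic C₁ : det[[2A,B,C],[B,2D,E],[C,E,2F]] = 0. -/

import Mathlib

open MvPolynomial

lemma aux_det {k : Type*} [Field k] (a b c d e f y0 y1 y2 : k) (h0 : y0 ≠ 0)
    (R0 : 2*a*y0 + b*y1 + c*y2 = 0) (R1 : b*y0 + 2*d*y1 + e*y2 = 0)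
    (R2 : c*y0 + e*y1 + 2*f*y2 = 0) :
    8*(a*d*f) + 2*(b*c*e) - 2*(a*e^2) - 2*(c^2*d) - 2*(b^2*f) = 0 := by
  have h : (8*(a*d*f) + 2*(b*c*e) - 2*(a*e^2) - 2*(c^2*d) - 2*(b^2*f)) * y0 = 0 := by
    linear_combination (4*d*f - e^2) * R0 + (c*e - 2*b*f) * R1 + (b*e - 2*c*d) * R2
  rcases mul_eq_zero.1 h with h | h
  · exact h
  · exact absurd h h0

lemma aux_pd {k : Type*} [Field k] (a b c d e f a' b' c' d' e' f' y0 y1 y2 : k) (h0 : y0 ≠ 0)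
    (R0 : 2*a*y0 + b*y1 + c*y2 = 0) (R1 : b*y0 + 2*d*y1 + e*y2 = 0)
    (R2 : c*y0 + e*y1 + 2*f*y2 = 0)
    (S : a'*y0^2 + b'*(y0*y1) + c'*(y0*y2) + d'*y1^2 + e'*(y1*y2) + f'*y2^2 = 0) :
    8*(a'*d*f + a*d'*f + a*d*f') + 2*(b'*c*e + b*c'*e + b*c*e')
      - 2*(a'*e^2 + 2*a*e*e') - 2*(c^2*d' + 2*c*c'*d) - 2*(b^2*f' + 2*b*b'*f) = 0 := by
  have h : (8*(a'*d*f + a*d'*f + a*d*f') + 2*(b'*c*e + b*c'*e + b*c*e')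
      - 2*(a'*e^2 + 2*a*e*e') - 2*(c^2*d' + 2*c*c'*d) - 2*(b^2*f' + 2*b*b'*f)) * y0^2 = 0 := by
    linear_combination (2*(4*d*f - e^2)) * S
      + (4*d'*f*y0 - 2*e'*e*y0 + 4*f'*d*y0) * R0
      + (-4*b'*f*y0 + 2*c'*e*y0 - 4*d'*f*y1 + 2*e'*c*y0 + 2*e'*e*y1 - 2*f'*b*y0 + 2*f'*e*y2) * R1
      + (2*b'*e*y0 - 4*c'*d*y0 - 2*d'*c*y0 + 2*d'*e*y1 - 4*e'*d*y1 - 4*f'*d*y2) * R2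
  rcases mul_eq_zero.1 h with h | h
  · exact h
  · exact absurd h (pow_ne_zero 2 h0)

/-- Let W ⊂ ℙ²×ℙ² be the bidegree (2,2) hypersurface
A y₀² + B y₀y₁ + C y₀y₂ + D y₁² + E y₁y₂ + F y₂² = 0, with A,…,F quadratic forms
in x₀,x₁,x₂ over a field k of characteristic ≠ 2.  If (x,y) (with x ≠ 0, y ≠ 0
affine representatives) is a singular point of W — i.e. the defining equation and
all its partial derivatives in the x- and y-variables vanish there — then x is a
singular point of the discriminant sextic
C₁ : det [[2A,B,C],[B,2D,E],[C,E,2F]] = 0. -/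
theorem stmt_16 (k : Type*) [Field k] (hchar : ringChar k ≠ 2)
    (A B C D E F : MvPolynomial (Fin 3) k)
    (hA : A.IsHomogeneous 2) (hB : B.IsHomogeneous 2) (hC : C.IsHomogeneous 2)
    (hD : D.IsHomogeneous 2) (hE : E.IsHomogeneous 2) (hF : F.IsHomogeneous 2)
    (x y : Fin 3 → k) (hx : x ≠ 0) (hy : y ≠ 0)
    -- (x,y) lies on W:
    (hW : eval x A * (y 0)^2 + eval x B * (y 0 * y 1) + eval x C * (y 0 * y 2)
        + eval x D * (y 1)^2 + eval x E * (y 1 * y 2) + eval x F * (y 2)^2 = 0)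
    -- all x-partials of the defining equation vanish at (x,y):
    (hdx : ∀ i : Fin 3,
      eval x (pderiv i A) * (y 0)^2 + eval x (pderiv i B) * (y 0 * y 1)
        + eval x (pderiv i C) * (y 0 * y 2) + eval x (pderiv i D) * (y 1)^2
        + eval x (pderiv i E) * (y 1 * y 2) + eval x (pderiv i F) * (y 2)^2 = 0)
    -- all y-partials of the defining equation vanish at (x,y):
    (hdy0 : 2 * eval x A * y 0 + eval x B * y 1 + eval x C * y 2 = 0)
    (hdy1 : eval x B * y 0 + 2 * eval x D * y 1 + eval x E * y 2 = 0)
    (hdy2 : eval x C * y 0 + eval x E * y 1 + 2 * eval x F * y 2 = 0) :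
    eval x (Matrix.det !![2*A, B, C; B, 2*D, E; C, E, 2*F]) = 0 ∧
    ∀ i : Fin 3, eval x (pderiv i (Matrix.det !![2*A, B, C; B, 2*D, E; C, E, 2*F])) = 0 := by
  have hdet : Matrix.det !![2*A, B, C; B, 2*D, E; C, E, 2*F]
      = 8 * (A*D*F) + 2 * (B*C*E) - 2 * (A*(E*E)) - 2 * ((C*C)*D) - 2 * ((B*B)*F) := by
    rw [Matrix.det_fin_three]; simp [Matrix.vecHead, Matrix.vecTail]; ring
  have h8 : ∀ i : Fin 3, pderiv i (8 : MvPolynomial (Fin 3) k) = 0 := fun i => by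
    rw [show (8 : MvPolynomial (Fin 3) k) = MvPolynomial.C 8 from (map_ofNat MvPolynomial.C 8).symm]
    exact pderiv_C
  have h2 : ∀ i : Fin 3, pderiv i (2 : MvPolynomial (Fin 3) k) = 0 := fun i => by
    rw [show (2 : MvPolynomial (Fin 3) k) = MvPolynomial.C 2 from (map_ofNat MvPolynomial.C 2).symm]
    exact pderiv_C
  have key1 : eval x (Matrix.det !![2*A, B, C; B, 2*D, E; C, E, 2*F])
      = 8*(eval x A * eval x D * eval x F) + 2*(eval x B * eval x C * eval x E)
        - 2*(eval x A * (eval x E)^2) - 2*((eval x C)^2 * eval x D)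
        - 2*((eval x B)^2 * eval x F) := by
    rw [hdet]
    simp only [map_add, map_sub, map_mul, map_ofNat]
    ring
  have key2 : ∀ i : Fin 3, eval x (pderiv i (Matrix.det !![2*A, B, C; B, 2*D, E; C, E, 2*F]))
      = 8*(eval x (pderiv i A) * eval x D * eval x F + eval x A * eval x (pderiv i D) * eval x F
            + eval x A * eval x D * eval x (pderiv i F))
        + 2*(eval x (pderiv i B) * eval x C * eval x E + eval x B * eval x (pderiv i C) * eval x E
            + eval x B * eval x C * eval x (pderiv i E))
        - 2*(eval x (pderiv i A) * (eval x E)^2 + 2 * eval x A * eval x E * eval x (pderiv i E))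
        - 2*((eval x C)^2 * eval x (pderiv i D) + 2 * eval x C * eval x (pderiv i C) * eval x D)
        - 2*((eval x B)^2 * eval x (pderiv i F) + 2 * eval x B * eval x (pderiv i B) * eval x F) := by
    intro i
    rw [hdet]
    simp only [map_add, map_sub, pderiv_mul, h8, h2, zero_mul, mul_zero, add_zero, zero_add,
      map_mul, map_ofNat]
    ring
  obtain ⟨j, hj⟩ : ∃ j, y j ≠ 0 := by
    by_contra h
    push_neg at h
    exact hy (funext fun j => h j)
  refine ⟨?_, fun i => ?_⟩
  · rw [key1]
    fin_cases j
    · exact aux_det (eval x A) (eval x B) (eval x C) (eval x D) (eval x E) (eval x F)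
        (y 0) (y 1) (y 2) hj hdy0 hdy1 hdy2
    · have R0' : 2 * eval x D * y 1 + eval x B * y 0 + eval x E * y 2 = 0 := by
        linear_combination hdy1
      have R1' : eval x B * y 1 + 2 * eval x A * y 0 + eval x C * y 2 = 0 := by
        linear_combination hdy0
      have R2' : eval x E * y 1 + eval x C * y 0 + 2 * eval x F * y 2 = 0 := by
        linear_combination hdy2
      linear_combination aux_det (eval x D) (eval x B) (eval x E) (eval x A) (eval x C) (eval x F)
        (y 1) (y 0) (y 2) hj R0' R1' R2'
    · have R0' : 2 * eval x F * y 2 + eval x E * y 1 + eval x C * y 0 = 0 := by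
        linear_combination hdy2
      have R1' : eval x E * y 2 + 2 * eval x D * y 1 + eval x B * y 0 = 0 := by
        linear_combination hdy1
      have R2' : eval x C * y 2 + eval x B * y 1 + 2 * eval x A * y 0 = 0 := by
        linear_combination hdy0
      linear_combination aux_det (eval x F) (eval x E) (eval x C) (eval x D) (eval x B) (eval x A)
        (y 2) (y 1) (y 0) hj R0' R1' R2'
  · rw [key2 i]
    fin_cases j
    · exact aux_pd (eval x A) (eval x B) (eval x C) (eval x D) (eval x E) (eval x F)
        (eval x (pderiv i A)) (eval x (pderiv i B)) (eval x (pderiv i C))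
        (eval x (pderiv i D)) (eval x (pderiv i E)) (eval x (pderiv i F))
        (y 0) (y 1) (y 2) hj hdy0 hdy1 hdy2 (hdx i)
    · have R0' : 2 * eval x D * y 1 + eval x B * y 0 + eval x E * y 2 = 0 := by
        linear_combination hdy1
      have R1' : eval x B * y 1 + 2 * eval x A * y 0 + eval x C * y 2 = 0 := by
        linear_combination hdy0
      have R2' : eval x E * y 1 + eval x C * y 0 + 2 * eval x F * y 2 = 0 := by
        linear_combination hdy2
      have S' : eval x (pderiv i D) * (y 1)^2 + eval x (pderiv i B) * (y 1 * y 0)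
          + eval x (pderiv i E) * (y 1 * y 2) + eval x (pderiv i A) * (y 0)^2
          + eval x (pderiv i C) * (y 0 * y 2) + eval x (pderiv i F) * (y 2)^2 = 0 := by
        linear_combination hdx i
      linear_combination aux_pd (eval x D) (eval x B) (eval x E) (eval x A) (eval x C) (eval x F)
        (eval x (pderiv i D)) (eval x (pderiv i B)) (eval x (pderiv i E))
        (eval x (pderiv i A)) (eval x (pderiv i C)) (eval x (pderiv i F))
        (y 1) (y 0) (y 2) hj R0' R1' R2' S'
    · have R0' : 2 * eval x F * y 2 + eval x E * y 1 + eval x C * y 0 = 0 := by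
        linear_combination hdy2
      have R1' : eval x E * y 2 + 2 * eval x D * y 1 + eval x B * y 0 = 0 := by
        linear_combination hdy1
      have R2' : eval x C * y 2 + eval x B * y 1 + 2 * eval x A * y 0 = 0 := by
        linear_combination hdy0
      have S' : eval x (pderiv i F) * (y 2)^2 + eval x (pderiv i E) * (y 2 * y 1)
          + eval x (pderiv i C) * (y 2 * y 0) + eval x (pderiv i D) * (y 1)^2
          + eval x (pderiv i B) * (y 1 * y 0) + eval x (pderiv i A) * (y 0)^2 = 0 := by
        linear_combination hdx i
      linear_combination aux_pd (eval x F) (eval x E) (eval x C) (eval x D) (eval x B) (eval x A)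
        (eval x (pderiv i F)) (eval x (pderiv i E)) (eval x (pderiv i C))
        (eval x (pderiv i D)) (eval x (pderiv i B)) (eval x (pderiv i A))
        (y 2) (y 1) (y 0) hj R0' R1' R2' S'
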